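/- Let a and n be positive integers with 1 ≤ a < n and gcd(a,n) = 1. The set of lattice points in the interior of P_{a,n} is exactly {(⌈k·a/n⌉, k) : k = 1, 2, …, n−1}, i.e. a point (x,y) ∈ ℤ² lies in the interior of P_{a,n} if and only if there exists k with 1 ≤ k ≤ n−1, y = k and x = ⌈k·a/n⌉. -/

import Mathlib

/-- `(x, y) ∈ ℤ²` lies in the interior of the lattice parallelogram
`P_{a,n} = {t₁·(1,0) + t₂·(a,n) : 0 ≤ t₁, t₂ ≤ 1}`. -/
def inInteriorP (a n : ℤ) (p : ℤ × ℤ) : Prop :=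
  ∃ t₁ t₂ : ℝ, 0 < t₁ ∧ t₁ < 1 ∧ 0 < t₂ ∧ t₂ < 1 ∧
    (p.1 : ℝ) = t₁ + t₂ * (a : ℝ) ∧ (p.2 : ℝ) = t₂ * (n : ℝ)

/-- The lattice points in the interior of `P_{a,n}` are exactly the points
`(⌈k·a/n⌉, k)` for `k = 1, …, n − 1`. -/
theorem interior_lattice_points_eq (a n : ℤ) (ha : 1 ≤ a) (han : a < n)
    (hgcd : Int.gcd a n = 1) (x y : ℤ) :
    inInteriorP a n (x, y) ↔
      ∃ k : ℤ, 1 ≤ k ∧ k ≤ n - 1 ∧ y = k ∧ x = ⌈(k * a : ℚ) / (n : ℚ)⌉ := by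
  have hnZ : (0 : ℤ) < n := lt_trans (lt_of_lt_of_le one_pos ha) han
  have hnR : (0 : ℝ) < (n : ℝ) := by exact_mod_cast hnZ
  have hnQ : (0 : ℚ) < (n : ℚ) := by exact_mod_cast hnZ
  constructor
  · rintro ⟨t₁, t₂, h1, h2, h3, h4, hx, hy⟩
    simp only at hx hy
    have ht₂ : t₂ = (y : ℝ) / n := by field_simp; linarith [hy]
    have hy1R : (0 : ℝ) < (y : ℝ) := by
      have : 0 < t₂ * (n : ℝ) := mul_pos h3 hnR
      linarith [hy]
    have hy2R : (y : ℝ) < n := by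
      have : t₂ * (n : ℝ) < 1 * n := by
        exact mul_lt_mul_of_pos_right h4 hnR
      rw [one_mul] at this; linarith [hy]
    have hy1 : (1 : ℤ) ≤ y := by exact_mod_cast hy1R
    have hy2 : y ≤ n - 1 := by
      have : y < n := by exact_mod_cast hy2R
      omega
    refine ⟨y, hy1, hy2, rfl, ?_⟩
    -- bounds on x
    have hxval : (x : ℝ) = t₁ + (y : ℝ) * a / n := by
      rw [hx, ht₂]; ring
    have hlb : (y : ℝ) * a / n < (x : ℝ) := by rw [hxval]; linarith
    have hub : (x : ℝ) < (y : ℝ) * a / n + 1 := by rw [hxval]; linarith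
    have hlbQ : ((y : ℚ) * a / n) < (x : ℚ) := by
      have : (((y : ℚ) * a / n : ℚ) : ℝ) < ((x : ℚ) : ℝ) := by push_cast; exact hlb
      exact_mod_cast this
    have hubQ : ((x : ℚ)) - 1 < (y : ℚ) * a / n := by
      have : ((x : ℚ) : ℝ) - 1 < (((y : ℚ) * a / n : ℚ) : ℝ) := by push_cast; linarith
      exact_mod_cast this
    symm
    rw [Int.ceil_eq_iff]
    constructor
    · push_cast; push_cast at hubQ; linarith
    · push_cast; push_cast at hlbQ; linarith
  · rintro ⟨y, hk1, hk2, rfl, rfl⟩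
    set q : ℚ := (y * a : ℚ) / n with hq
    have hqlt : q < (⌈q⌉ : ℚ) := by
      rcases lt_or_eq_of_le (Int.le_ceil q) with h | h
      · exact h
      · exfalso
        have : (⌈q⌉ : ℚ) * n = (y : ℚ) * a := by
          rw [← h, hq]; field_simp
        have hZ : (⌈q⌉ : ℤ) * n =  y * a := by exact_mod_cast this
        have hdvd : n ∣ y * a := ⟨⌈q⌉, by linarith [hZ]⟩
        have hcop : IsCoprime (n : ℤ) a := by
          rw [Int.isCoprime_iff_gcd_eq_one, Int.gcd_comm]; exact hgcd
        have hnk : n ∣ y := hcop.dvd_of_dvd_mul_right hdvd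
        have := Int.le_of_dvd (by omega) hnk
        omega
    have hqub : (⌈q⌉ : ℚ) < q + 1 := Int.ceil_lt_add_one q
    refine ⟨(⌈q⌉ : ℝ) - (y : ℝ) * a / n, (y : ℝ) / n, ?_, ?_, ?_, ?_, ?_, ?_⟩
    · have : (q : ℝ) < ((⌈q⌉ : ℚ) : ℝ) := by exact_mod_cast hqlt
      rw [hq] at this; push_cast at this ⊢; linarith
    · have : ((⌈q⌉ : ℚ) : ℝ) < (q : ℝ) + 1 := by exact_mod_cast hqub
      rw [hq] at this; push_cast at this ⊢; linarith
    · positivity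
    · rw [div_lt_one hnR]
      have : y < n := by omega
      exact_mod_cast this
    · simp only; push_cast; field_simp; ring
    · simp only; field_simp
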